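/- Let f : ℝⁿ → ℝ be differentiable with L-Lipschitz gradient, bounded below, and let (wₜ) be gradient descent iterates with step size 0 < η ≤ 1/L. Then the sequence of step lengths tends to zero: ‖w_{t+1} - wₜ‖ → 0 as t → ∞. -/

import Mathlib

open Filter

lemma descent_lemma {n : ℕ} (f : EuclideanSpace ℝ (Fin n) → ℝ)
    (hf : Differentiable ℝ f) (L : ℝ) (hL : 0 < L)
    (hlip : LipschitzWith (Real.toNNReal L) (gradient f))
    (x v : EuclideanSpace ℝ (Fin n)) :
    f (x + v) ≤ f x + inner ℝ (gradient f x) v + L / 2 * ‖v‖ ^ 2 := by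
  have hg : ∀ t : ℝ, HasDerivAt (fun t : ℝ => f (x + t • v))
      (inner ℝ (gradient f (x + t • v)) v : ℝ) t := by
    intro t
    have hc : HasDerivAt (fun t : ℝ => x + t • v) v t := by
      simpa using ((hasDerivAt_id t).smul_const v).const_add x
    have hfd := ((hf (x + t • v)).hasGradientAt).hasFDerivAt
    have := hfd.comp_hasDerivAt t hc
    simpa [InnerProductSpace.toDual_apply_apply, Function.comp_def] using this
  set φ : ℝ → ℝ := fun t =>
    L / 2 * ‖v‖ ^ 2 * t ^ 2 + t * inner ℝ (gradient f x) v + f x - f (x + t • v) with hφ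
  have hφd : ∀ t : ℝ, HasDerivAt φ
      (L * ‖v‖ ^ 2 * t + inner ℝ (gradient f x) v - inner ℝ (gradient f (x + t • v)) v) t := by
    intro t
    have h1 : HasDerivAt (fun t : ℝ => L / 2 * ‖v‖ ^ 2 * t ^ 2 + t * inner ℝ (gradient f x) v + f x)
        (L / 2 * ‖v‖ ^ 2 * (2 * t) + inner ℝ (gradient f x) v) t := by
      have := (((hasDerivAt_pow 2 t).const_mul (L / 2 * ‖v‖ ^ 2)).add
        ((hasDerivAt_id t).mul_const (inner ℝ (gradient f x) v : ℝ))).add_const (f x)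
      simpa using this
    have := h1.sub (hg t)
    convert this using 1
    · rfl
    · rfl
    · rfl
    ring
  have hmono : MonotoneOn φ (Set.Icc 0 1) := by
    apply monotoneOn_of_deriv_nonneg (convex_Icc 0 1)
    · exact Continuous.continuousOn (by
        have : Continuous φ := by
          have : Differentiable ℝ φ := fun t => (hφd t).differentiableAt
          exact this.continuous
        exact this)
    · intro t _
      exact (hφd t).differentiableAt.differentiableWithinAt
    · intro t ht
      rw [interior_Icc] at ht
      rw [(hφd t).deriv]
      have hip : inner ℝ (gradient f (x + t • v) - gradient f x) v ≤
          L * ‖v‖ ^ 2 * t := by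
        calc inner ℝ (gradient f (x + t • v) - gradient f x) v
            ≤ ‖gradient f (x + t • v) - gradient f x‖ * ‖v‖ := real_inner_le_norm _ _
          _ ≤ (L * ‖t • v‖) * ‖v‖ := by
              apply mul_le_mul_of_nonneg_right _ (norm_nonneg _)
              rw [← dist_eq_norm]
              calc dist (gradient f (x + t • v)) (gradient f x)
                  ≤ (Real.toNNReal L : ℝ) * dist (x + t • v) x := hlip.dist_le_mul _ _
                _ = L * ‖t • v‖ := by
                    rw [Real.coe_toNNReal _ hL.le, dist_eq_norm, add_sub_cancel_left]
          _ = L * ‖v‖ ^ 2 * |t| := by rw [norm_smul]; simp [Real.norm_eq_abs]; ring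
          _ = L * ‖v‖ ^ 2 * t := by rw [abs_of_pos ht.1]
      rw [inner_sub_left] at hip
      linarith
  have h01 := hmono (Set.mem_Icc.mpr ⟨le_refl 0, zero_le_one⟩)
    (Set.mem_Icc.mpr ⟨zero_le_one, le_refl 1⟩) zero_le_one
  have hφ0 : φ 0 = 0 := by simp [hφ]
  have hφ1 : φ 1 = L / 2 * ‖v‖ ^ 2 + inner ℝ (gradient f x) v + f x - f (x + v) := by
    simp only [hφ, one_pow, mul_one, one_smul, one_mul]
  rw [hφ0, hφ1] at h01
  linarith

theorem step_lengths_tendsto_zero {n : ℕ} (f : EuclideanSpace ℝ (Fin n) → ℝ)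
    (hf : Differentiable ℝ f) (L : ℝ) (hL : 0 < L)
    (hlip : LipschitzWith (Real.toNNReal L) (gradient f))
    (fstar : ℝ) (hbound : ∀ x, f x ≥ fstar)
    (η : ℝ) (hη : 0 < η) (hηL : η ≤ 1 / L)
    (w : ℕ → EuclideanSpace ℝ (Fin n))
    (hrec : ∀ t, w (t + 1) = w t - η • gradient f (w t)) :
    Tendsto (fun t => ‖w (t + 1) - w t‖) atTop (nhds 0) := by
  have hηL' : η * L ≤ 1 := by
    have := (le_div_iff₀ hL).mp hηL
    linarith
  have hnorm : ∀ t, ‖w (t + 1) - w t‖ = η * ‖gradient f (w t)‖ := by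
    intro t
    rw [hrec t, sub_sub_cancel_left, norm_neg, norm_smul, Real.norm_eq_abs, abs_of_pos hη]
  have key : ∀ t, f (w (t + 1)) ≤ f (w t) - η / 2 * ‖gradient f (w t)‖ ^ 2 := by
    intro t
    have h := descent_lemma f hf L hL hlip (w t) (-(η • gradient f (w t)))
    rw [← sub_eq_add_neg, ← hrec t] at h
    have h1 : inner ℝ (gradient f (w t)) (-(η • gradient f (w t))) =
        -(η * ‖gradient f (w t)‖ ^ 2) := by
      rw [inner_neg_right, real_inner_smul_right, real_inner_self_eq_norm_sq]
    have h2 : ‖-(η • gradient f (w t))‖ ^ 2 = η ^ 2 * ‖gradient f (w t)‖ ^ 2 := by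
      rw [norm_neg, norm_smul, Real.norm_eq_abs, abs_of_pos hη, mul_pow]
    rw [h1, h2] at h
    nlinarith [sq_nonneg ‖gradient f (w t)‖, sq_nonneg η]
  set a : ℕ → ℝ := fun t => f (w t) with ha
  have hanti : Antitone a := by
    apply antitone_nat_of_succ_le
    intro t
    have := key t
    nlinarith [sq_nonneg ‖gradient f (w t)‖]
  have hbdd : BddBelow (Set.range a) := ⟨fstar, by rintro _ ⟨t, rfl⟩; exact hbound (w t)⟩
  have hconv : Tendsto a atTop (nhds (⨅ t, a t)) := tendsto_atTop_ciInf hanti hbdd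
  have hconv' : Tendsto (fun t => a (t + 1)) atTop (nhds (⨅ t, a t)) :=
    hconv.comp (tendsto_add_atTop_nat 1)
  have hdiff : Tendsto (fun t => a t - a (t + 1)) atTop (nhds 0) := by
    simpa using hconv.sub hconv'
  have hsq : Tendsto (fun t => ‖w (t + 1) - w t‖ ^ 2) atTop (nhds 0) := by
    apply squeeze_zero (fun t => sq_nonneg _) (g := fun t => 2 * η * (a t - a (t + 1)))
    · intro t
      have hk := key t
      have hn := hnorm t
      have : ‖w (t + 1) - w t‖ ^ 2 = η ^ 2 * ‖gradient f (w t)‖ ^ 2 := by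
        rw [hn]; ring
      rw [this]
      nlinarith [sq_nonneg ‖gradient f (w t)‖, hη.le]
    · simpa using hdiff.const_mul (2 * η)
  have := (Real.continuous_sqrt.tendsto 0).comp hsq
  simp only [Function.comp_def, Real.sqrt_zero] at this
  convert this using 2 with t
  rw [Real.sqrt_sq (norm_nonneg _)]
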